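/- For any δ > 0 and initial data λ(0) = 1, λ'(0) = λ₁ ∈ ℝ, the ODE λ''(t)λ(t)^{3γ-2} = δ with 1 < γ ≤ 5/3 has a unique global solution λ : [0,∞) → (0,∞), and there exist constants 0 < c₁ ≤ c₂ such that c₁ t ≤ λ(t) ≤ c₂ t for all sufficiently large t. -/

import Mathlib

noncomputable section
open Real Set

set_option linter.unusedSectionVars false
set_option linter.unusedVariables false

/-- `lam` is a positive solution on `[0,∞)` of the Sideris ODE
`λ'' λ^{3γ-2} = δ` with initial data `λ(0) = 1`, `λ'(0) = λ₁`. -/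
def SiderisSol (γ δ lam₁ : ℝ) (lam : ℝ → ℝ) : Prop :=
  (∀ t ∈ Ici (0:ℝ), 0 < lam t ∧
      HasDerivAt lam (deriv lam t) t ∧
      HasDerivAt (deriv lam) (deriv (deriv lam) t) t ∧
      deriv (deriv lam) t * (lam t) ^ (3 * γ - 2) = δ) ∧
  lam 0 = 1 ∧ deriv lam 0 = lam₁

namespace SiderisAux

open Filter Topology MeasureTheory

variable (α δ lam₁ : ℝ)

def Ac : ℝ := (α - 1) / (2 * δ)
def Bc : ℝ := 1 + Ac α δ * lam₁ ^ 2
def vI : ℝ := Real.sqrt (Bc α δ lam₁ / Ac α δ)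
def qf (v : ℝ) : ℝ := Bc α δ lam₁ - Ac α δ * v ^ 2
def Lf (v : ℝ) : ℝ := qf α δ lam₁ v ^ (-(α - 1)⁻¹)
def gf (v : ℝ) : ℝ := qf α δ lam₁ v ^ (-(α / (α - 1))) / δ
def Tf (v : ℝ) : ℝ := ∫ w in lam₁..v, gf α δ lam₁ w

variable {α δ lam₁ : ℝ} (hα : 1 < α) (hδ : 0 < δ)
include hα hδ

lemma hA : 0 < Ac α δ := div_pos (by linarith) (by linarith)

lemma hB : 1 ≤ Bc α δ lam₁ := by
  have h1 := hA (δ := δ) hα hδ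
  have : 0 ≤ Ac α δ * lam₁ ^ 2 := by positivity
  simp only [Bc]; linarith

lemma hvI : 0 < vI α δ lam₁ := by
  apply Real.sqrt_pos.2
  exact div_pos (by linarith [hB (lam₁ := lam₁) hα hδ]) (hA hα hδ)

lemma sq_vI : Ac α δ * vI α δ lam₁ ^ 2 = Bc α δ lam₁ := by
  have hA' := hA (δ := δ) hα hδ
  have h : vI α δ lam₁ ^ 2 = Bc α δ lam₁ / Ac α δ :=
    Real.sq_sqrt (le_of_lt (div_pos (by linarith [hB (lam₁ := lam₁) hα hδ]) hA'))
  rw [h]; field_simp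

lemma qf_eq (v : ℝ) : qf α δ lam₁ v = Ac α δ * ((vI α δ lam₁ - v) * (vI α δ lam₁ + v)) := by
  have := sq_vI (lam₁ := lam₁) hα hδ
  simp only [qf]; nlinarith [sq_nonneg v]

lemma lam₁_mem : lam₁ ∈ Ioo (-(vI α δ lam₁)) (vI α δ lam₁) := by
  have hA' := hA (δ := δ) hα hδ
  have hs := sq_vI (lam₁ := lam₁) hα hδ
  have hv := hvI (lam₁ := lam₁) hα hδ
  have h : lam₁ ^ 2 < vI α δ lam₁ ^ 2 := by
    have : Ac α δ * lam₁ ^ 2 < Bc α δ lam₁ := by simp only [Bc]; linarith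
    nlinarith
  constructor <;> [skip; skip] <;> nlinarith

lemma qf_pos {v : ℝ} (hv : v ∈ Ioo (-(vI α δ lam₁)) (vI α δ lam₁)) :
    0 < qf α δ lam₁ v := by
  have hA' := hA (δ := δ) hα hδ
  rw [qf_eq hα hδ]
  have h1 : 0 < vI α δ lam₁ - v := by linarith [hv.2]
  have h2 : 0 < vI α δ lam₁ + v := by linarith [hv.1]
  positivity

omit hα hδ in
lemma qf_lam₁ : qf α δ lam₁ lam₁ = 1 := by simp [qf, Bc]

omit hα hδ in
lemma Lf_pos {v : ℝ} (hq : 0 < qf α δ lam₁ v) : 0 < Lf α δ lam₁ v :=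
  Real.rpow_pos_of_pos hq _

omit hα in
lemma gf_pos {v : ℝ} (hq : 0 < qf α δ lam₁ v) : 0 < gf α δ lam₁ v :=
  div_pos (Real.rpow_pos_of_pos hq _) hδ

lemma Lf_pow {v : ℝ} (hq : 0 < qf α δ lam₁ v) :
    Lf α δ lam₁ v ^ α = δ * gf α δ lam₁ v := by
  have h1 : Lf α δ lam₁ v ^ α = qf α δ lam₁ v ^ (-(α - 1)⁻¹ * α) := by
    rw [Lf, ← Real.rpow_mul hq.le]
  have h2 : -(α - 1)⁻¹ * α = -(α / (α - 1)) := by field_simp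
  rw [h1, h2, gf]
  field_simp

lemma hasDerivAt_qf (v : ℝ) : HasDerivAt (qf α δ lam₁) (-(Ac α δ * (2 * v))) v := by
  have h := ((hasDerivAt_pow 2 v).const_mul (Ac α δ)).const_sub (Bc α δ lam₁)
  exact h.congr_deriv (by ring)

lemma hasDerivAt_Lf {v : ℝ} (hq : 0 < qf α δ lam₁ v) :
    HasDerivAt (Lf α δ lam₁) (v * Lf α δ lam₁ v ^ α / δ) v := by
  have hrp := Real.hasDerivAt_rpow_const (p := -(α - 1)⁻¹) (Or.inl (ne_of_gt hq))
  have h := hrp.comp v (hasDerivAt_qf hα hδ v)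
  have key : -(α - 1)⁻¹ * qf α δ lam₁ v ^ (-(α - 1)⁻¹ - 1) * -(Ac α δ * (2 * v)) =
      v * Lf α δ lam₁ v ^ α / δ := by
    have hne : α - 1 ≠ 0 := by linarith
    have he : -(α - 1)⁻¹ - 1 = -(α - 1)⁻¹ * α := by field_simp; ring
    have h1 : Lf α δ lam₁ v ^ α = qf α δ lam₁ v ^ (-(α - 1)⁻¹ * α) := by
      rw [Lf, ← Real.rpow_mul hq.le]
    rw [he, h1, Ac]
    have hne : α - 1 ≠ 0 := by linarith
    field_simp
  rw [key] at h
  exact h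

lemma gcont {v : ℝ} (hq : 0 < qf α δ lam₁ v) : ContinuousAt (gf α δ lam₁) v := by
  have hqc : Continuous (qf α δ lam₁) := by
    show Continuous fun v => Bc α δ lam₁ - Ac α δ * v ^ 2
    fun_prop
  have := (Real.continuousAt_rpow_const (qf α δ lam₁ v) (-(α / (α - 1)))
    (Or.inl (ne_of_gt hq))).comp hqc.continuousAt
  exact this.div_const δ

lemma uIcc_subset {u v : ℝ} (hu : u ∈ Ioo (-(vI α δ lam₁)) (vI α δ lam₁))
    (hv : v ∈ Ioo (-(vI α δ lam₁)) (vI α δ lam₁)) :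
    uIcc u v ⊆ Ioo (-(vI α δ lam₁)) (vI α δ lam₁) :=
  (ordConnected_Ioo).uIcc_subset hu hv

lemma gf_intble {u v : ℝ} (hu : u ∈ Ioo (-(vI α δ lam₁)) (vI α δ lam₁))
    (hv : v ∈ Ioo (-(vI α δ lam₁)) (vI α δ lam₁)) :
    IntervalIntegrable (gf α δ lam₁) volume u v := by
  apply ContinuousOn.intervalIntegrable
  intro w hw
  exact (gcont hα hδ (qf_pos hα hδ (uIcc_subset hα hδ hu hv hw))).continuousWithinAt

lemma hasDerivAt_Tf {v : ℝ} (hv : v ∈ Ioo (-(vI α δ lam₁)) (vI α δ lam₁)) :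
    HasDerivAt (Tf α δ lam₁) (gf α δ lam₁ v) v := by
  apply intervalIntegral.integral_hasDerivAt_right
    (gf_intble hα hδ (lam₁_mem hα hδ) hv)
  · have : ContinuousOn (gf α δ lam₁) (Ioo (-(vI α δ lam₁)) (vI α δ lam₁)) :=
      fun w hw => (gcont hα hδ (qf_pos hα hδ hw)).continuousWithinAt
    exact this.stronglyMeasurableAtFilter isOpen_Ioo v hv
  · exact gcont hα hδ (qf_pos hα hδ hv)

lemma Tf_contOn : ContinuousOn (Tf α δ lam₁) (Ioo (-(vI α δ lam₁)) (vI α δ lam₁)) :=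
  fun v hv => (hasDerivAt_Tf hα hδ hv).continuousAt.continuousWithinAt

lemma Tf_mono : StrictMonoOn (Tf α δ lam₁) (Ioo (-(vI α δ lam₁)) (vI α δ lam₁)) := by
  apply strictMonoOn_of_deriv_pos (convex_Ioo _ _) (Tf_contOn hα hδ)
  intro v hv
  rw [interior_Ioo] at hv
  rw [(hasDerivAt_Tf hα hδ hv).deriv]
  exact gf_pos hδ (qf_pos hα hδ hv)

lemma Tf_lam₁ : Tf α δ lam₁ lam₁ = 0 := intervalIntegral.integral_same


lemma hp : 1 < α / (α - 1) := (one_lt_div (by linarith)).2 (by linarith)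

lemma Tf_lower {v : ℝ} (hv : v ∈ Ico lam₁ (vI α δ lam₁)) :
    (2 * Ac α δ * vI α δ lam₁) ^ (-(α / (α - 1))) / δ / (α / (α - 1) - 1) *
      ((vI α δ lam₁ - v) ^ (1 - α / (α - 1)) - (vI α δ lam₁ - lam₁) ^ (1 - α / (α - 1)))
      ≤ Tf α δ lam₁ v := by
  set p := α / (α - 1) with hpdef
  have hp1 : 1 < p := hp hα hδ
  have hne : p - 1 ≠ 0 := by intro h; rw [sub_eq_zero] at h; rw [h] at hp1; exact lt_irrefl 1 hp1
  have hpne : -p ≠ -1 := by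
    intro h
    exact hne (by linarith)
  have hA' := hA (δ := δ) hα hδ
  have hvI' := hvI (lam₁ := lam₁) hα hδ
  have hl1 := lam₁_mem (lam₁ := lam₁) hα hδ
  have hvmem : v ∈ Ioo (-(vI α δ lam₁)) (vI α δ lam₁) := ⟨lt_of_lt_of_le hl1.1 hv.1, hv.2⟩
  set c : ℝ := (2 * Ac α δ * vI α δ lam₁) ^ (-p) / δ with hcdef
  have hcpos : 0 < c := by
    rw [hcdef]
    apply div_pos _ hδ
    apply Real.rpow_pos_of_pos
    positivity
  have hgf : ∀ w : ℝ, gf α δ lam₁ w = qf α δ lam₁ w ^ (-p) / δ := fun w => rfl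
  clear_value p c
  -- pointwise bound
  have hpt : ∀ w ∈ Icc lam₁ v, c * (vI α δ lam₁ - w) ^ (-p) ≤ gf α δ lam₁ w := by
    intro w hw
    have hwmem : w ∈ Ioo (-(vI α δ lam₁)) (vI α δ lam₁) :=
      ⟨lt_of_lt_of_le hl1.1 hw.1, lt_of_le_of_lt hw.2 hv.2⟩
    have hq := qf_pos hα hδ hwmem
    have hsub : 0 < vI α δ lam₁ - w := by linarith [hwmem.2]
    have hb : qf α δ lam₁ w ≤ 2 * Ac α δ * vI α δ lam₁ * (vI α δ lam₁ - w) := by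
      rw [qf_eq hα hδ]
      have h5 : (vI α δ lam₁ - w) * (vI α δ lam₁ + w) ≤ (vI α δ lam₁ - w) * (2 * vI α δ lam₁) :=
        mul_le_mul_of_nonneg_left (by linarith [hwmem.2]) hsub.le
      nlinarith [mul_le_mul_of_nonneg_left h5 hA'.le]
    have h1 : (2 * Ac α δ * vI α δ lam₁ * (vI α δ lam₁ - w)) ^ (-p) ≤ qf α δ lam₁ w ^ (-p) :=
      Real.rpow_le_rpow_of_nonpos hq hb (by linarith)
    have h2 : (2 * Ac α δ * vI α δ lam₁ * (vI α δ lam₁ - w)) ^ (-p)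
        = (2 * Ac α δ * vI α δ lam₁) ^ (-p) * (vI α δ lam₁ - w) ^ (-p) :=
      Real.mul_rpow (by positivity) hsub.le
    have hc_eq : c * (vI α δ lam₁ - w) ^ (-p)
        = (2 * Ac α δ * vI α δ lam₁) ^ (-p) * (vI α δ lam₁ - w) ^ (-p) / δ := by
      rw [hcdef]; ring
    rw [hc_eq, hgf w]
    gcongr
    rw [← h2]
    exact h1
  -- integrability of the minorant
  have hcont : ContinuousOn (fun w => c * (vI α δ lam₁ - w) ^ (-p)) (uIcc lam₁ v) := by
    rw [uIcc_of_le hv.1]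
    intro w hw
    have hsub : 0 < vI α δ lam₁ - w := by
      have h6 : w ≤ v := hw.2
      have h7 := hv.2
      linarith
    exact (continuousAt_const.mul
      (((continuous_const.sub continuous_id).continuousAt).rpow_const
        (Or.inl (ne_of_gt hsub)))).continuousWithinAt
  have hint1 : IntervalIntegrable (fun w => c * (vI α δ lam₁ - w) ^ (-p)) volume lam₁ v :=
    hcont.intervalIntegrable
  have hint2 := gf_intble hα hδ (lam₁_mem hα hδ) hvmem
  have hmono := intervalIntegral.integral_mono_on hv.1 hint1 hint2 hpt
  -- evaluate the minorant integral
  have heval : (∫ w in lam₁..v, c * (vI α δ lam₁ - w) ^ (-p))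
      = c / (p - 1) * ((vI α δ lam₁ - v) ^ (1 - p) - (vI α δ lam₁ - lam₁) ^ (1 - p)) := by
    have hsubst := intervalIntegral.integral_comp_sub_left (a := lam₁) (b := v)
      (fun u => u ^ (-p)) (vI α δ lam₁)
    have h0 : (0:ℝ) ∉ Set.uIcc (vI α δ lam₁ - v) (vI α δ lam₁ - lam₁) := by
      rw [uIcc_of_le (by linarith [hv.1] : vI α δ lam₁ - v ≤ vI α δ lam₁ - lam₁)]
      rintro ⟨h1, h2⟩
      have : 0 < vI α δ lam₁ - v := by linarith [hv.2]
      linarith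
    rw [intervalIntegral.integral_const_mul, hsubst, integral_rpow (Or.inr ⟨hpne, h0⟩)]
    rw [show -p + 1 = 1 - p from by ring]
    set X := (vI α δ lam₁ - v) ^ (1 - p) with hX
    set Y := (vI α δ lam₁ - lam₁) ^ (1 - p) with hY
    clear_value X Y
    have h1p : 1 - p ≠ 0 := by intro h; apply hne; linarith [sub_eq_zero.mp h]
    field_simp
    ring
  rw [heval] at hmono
  exact hmono

lemma ttop : Tendsto (Tf α δ lam₁) (𝓝[<] (vI α δ lam₁)) atTop := by
  have hp1 : 1 < α / (α - 1) := hp hα hδ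
  have hA' := hA (δ := δ) hα hδ
  have hvI' := hvI (lam₁ := lam₁) hα hδ
  have hl1 := lam₁_mem (lam₁ := lam₁) hα hδ
  set p := α / (α - 1) with hpdef
  set c : ℝ := (2 * Ac α δ * vI α δ lam₁) ^ (-p) / δ / (p - 1) with hcdef
  have hcpos : 0 < c := by
    rw [hcdef]
    have h8 : (0:ℝ) < 2 * Ac α δ * vI α δ lam₁ := by positivity
    exact div_pos (div_pos (Real.rpow_pos_of_pos h8 _) hδ) (by linarith)
  clear_value p c
  have h1 : Tendsto (fun v => vI α δ lam₁ - v) (𝓝[<] (vI α δ lam₁)) (𝓝[>] (0:ℝ)) := by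
    apply tendsto_nhdsWithin_of_tendsto_nhds_of_eventually_within
    · have h0 : Tendsto (fun v : ℝ => vI α δ lam₁ - v) (𝓝 (vI α δ lam₁)) (𝓝 0) := by
        have hc : Continuous fun v : ℝ => vI α δ lam₁ - v := by fun_prop
        have := hc.tendsto (vI α δ lam₁)
        simpa using this
      exact h0.mono_left nhdsWithin_le_nhds
    · filter_upwards [self_mem_nhdsWithin] with x hx
      have hx' : x < vI α δ lam₁ := hx
      exact sub_pos.2 hx'
  have h2 : Tendsto (fun x : ℝ => x ^ (1 - p)) (𝓝[>] (0:ℝ)) atTop := by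
    have h := (tendsto_rpow_atTop (show (0:ℝ) < p - 1 by linarith)).comp tendsto_inv_nhdsGT_zero
    apply h.congr'
    filter_upwards [self_mem_nhdsWithin] with x hx
    have hx' : (0:ℝ) < x := hx
    show (x⁻¹) ^ (p - 1) = x ^ (1 - p)
    rw [Real.inv_rpow hx'.le, ← Real.rpow_neg hx'.le, neg_sub]
  have h3 : Tendsto (fun v => (vI α δ lam₁ - v) ^ (1 - p)) (𝓝[<] (vI α δ lam₁)) atTop :=
    h2.comp h1
  have h4 : Tendsto (fun v => c * ((vI α δ lam₁ - v) ^ (1 - p) - (vI α δ lam₁ - lam₁) ^ (1 - p)))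
      (𝓝[<] (vI α δ lam₁)) atTop := by
    apply Tendsto.const_mul_atTop hcpos
    exact tendsto_atTop_add_const_right _ _ h3
  apply tendsto_atTop_mono' _ _ h4
  filter_upwards [Ico_mem_nhdsLT_of_mem (Set.mem_Ioc.2 ⟨hl1.2, le_refl _⟩)] with v hv
  have := Tf_lower hα hδ hv
  rw [← hpdef, ← hcdef] at this
  exact this

lemma gf_even (w : ℝ) : gf α δ lam₁ (-w) = gf α δ lam₁ w := by
  simp only [gf, qf, neg_sq]

lemma neg_mem {v : ℝ} (hv : v ∈ Ioo (-(vI α δ lam₁)) (vI α δ lam₁)) :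
    -v ∈ Ioo (-(vI α δ lam₁)) (vI α δ lam₁) := ⟨by linarith [hv.2], by linarith [hv.1]⟩

lemma Tf_neg {v : ℝ} (hv : v ∈ Ioo (-(vI α δ lam₁)) (vI α δ lam₁)) :
    Tf α δ lam₁ (-v) = Tf α δ lam₁ (-lam₁) - Tf α δ lam₁ v := by
  have hl1 := lam₁_mem (lam₁ := lam₁) hα hδ
  have hml : -lam₁ ∈ Ioo (-(vI α δ lam₁)) (vI α δ lam₁) := neg_mem hα hδ hl1
  have hmv : -v ∈ Ioo (-(vI α δ lam₁)) (vI α δ lam₁) := neg_mem hα hδ hv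
  have key : (∫ x in (-lam₁)..v, gf α δ lam₁ x) = - Tf α δ lam₁ (-v) := by
    have h1 := intervalIntegral.integral_comp_neg (a := -lam₁) (b := v) (fun x => gf α δ lam₁ x)
    have h2 : (∫ x in (-lam₁)..v, gf α δ lam₁ (-x)) = ∫ x in (-lam₁)..v, gf α δ lam₁ x :=
      intervalIntegral.integral_congr (fun x _ => gf_even hα hδ x)
    rw [h2, neg_neg] at h1
    rw [h1]
    exact intervalIntegral.integral_symm lam₁ (-v)
  have chasles : Tf α δ lam₁ (-lam₁) + (∫ x in (-lam₁)..v, gf α δ lam₁ x) = Tf α δ lam₁ v :=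
    intervalIntegral.integral_add_adjacent_intervals
      (gf_intble hα hδ hl1 hml) (gf_intble hα hδ hml hv)
  rw [key] at chasles
  linarith

lemma tbot : Tendsto (Tf α δ lam₁) (𝓝[>] (-(vI α δ lam₁))) atBot := by
  have hvI' := hvI (lam₁ := lam₁) hα hδ
  have hneg : Tendsto (fun v : ℝ => -v) (𝓝[>] (-(vI α δ lam₁))) (𝓝[<] (vI α δ lam₁)) := by
    apply tendsto_nhdsWithin_of_tendsto_nhds_of_eventually_within
    · have h0 : Tendsto (fun v : ℝ => -v) (𝓝 (-(vI α δ lam₁))) (𝓝 (vI α δ lam₁)) := by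
        have := (continuous_neg : Continuous fun x : ℝ => -x).tendsto (-(vI α δ lam₁))
        simpa using this
      exact h0.mono_left nhdsWithin_le_nhds
    · filter_upwards [self_mem_nhdsWithin] with x hx
      simp only [mem_Iio]
      have h9 : -(vI α δ lam₁) < x := hx
      linarith
  have h1 : Tendsto (fun v => Tf α δ lam₁ (-lam₁) - Tf α δ lam₁ (-v))
      (𝓝[>] (-(vI α δ lam₁))) atBot := by
    apply tendsto_atBot_add_const_left
    apply Filter.tendsto_neg_atTop_atBot.comp
    exact (ttop hα hδ).comp hneg
  apply h1.congr'
  filter_upwards [Ioo_mem_nhdsGT_of_mem (Set.mem_Ico.2 ⟨le_refl _, by linarith⟩)] with v hv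
  have h10 := Tf_neg hα hδ (neg_mem hα hδ hv)
  rw [neg_neg] at h10
  linarith

lemma surj (y : ℝ) : ∃ v ∈ Ioo (-(vI α δ lam₁)) (vI α δ lam₁), Tf α δ lam₁ v = y := by
  have hvI' := hvI (lam₁ := lam₁) hα hδ
  have hIoo_top : Ioo (-(vI α δ lam₁)) (vI α δ lam₁) ∈ 𝓝[<] (vI α δ lam₁) :=
    Ioo_mem_nhdsLT_of_mem (Set.mem_Ioc.2 ⟨by linarith, le_refl _⟩)
  have hIoo_bot : Ioo (-(vI α δ lam₁)) (vI α δ lam₁) ∈ 𝓝[>] (-(vI α δ lam₁)) :=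
    Ioo_mem_nhdsGT_of_mem (Set.mem_Ico.2 ⟨le_refl _, by linarith⟩)
  obtain ⟨v₂, hv₂y, hv₂⟩ := (((ttop hα hδ).eventually (eventually_ge_atTop y)).and hIoo_top).exists
  obtain ⟨v₁, hv₁y, hv₁⟩ := (((tbot hα hδ).eventually (eventually_le_atBot y)).and hIoo_bot).exists
  have hy : y ∈ uIcc (Tf α δ lam₁ v₁) (Tf α δ lam₁ v₂) := by
    rw [Set.mem_uIcc]; left; exact ⟨hv₁y, hv₂y⟩
  have hsub : uIcc v₁ v₂ ⊆ Ioo (-(vI α δ lam₁)) (vI α δ lam₁) := uIcc_subset hα hδ hv₁ hv₂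
  obtain ⟨v, hvmem, hveq⟩ := intermediate_value_uIcc ((Tf_contOn hα hδ).mono hsub) hy
  exact ⟨v, hsub hvmem, hveq⟩

variable (lam₁) in
def Sf (hα : 1 < α) (hδ : 0 < δ) (y : ℝ) : ℝ := Classical.choose (surj (lam₁ := lam₁) hα hδ y)

variable (lam₁) in
lemma Sf_mem (y : ℝ) : Sf lam₁ hα hδ y ∈ Ioo (-(vI α δ lam₁)) (vI α δ lam₁) :=
  (Classical.choose_spec (surj hα hδ y)).1

variable (lam₁) in
lemma Tf_Sf (y : ℝ) : Tf α δ lam₁ (Sf lam₁ hα hδ y) = y :=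
  (Classical.choose_spec (surj hα hδ y)).2

variable (lam₁) in
lemma Sf_Tf {v : ℝ} (hv : v ∈ Ioo (-(vI α δ lam₁)) (vI α δ lam₁)) :
    Sf lam₁ hα hδ (Tf α δ lam₁ v) = v :=
  (Tf_mono hα hδ).injOn (Sf_mem lam₁ hα hδ _) hv (Tf_Sf lam₁ hα hδ _)

variable (lam₁) in
lemma Sf_zero : Sf lam₁ hα hδ (0 : ℝ) = lam₁ := by
  have h := Sf_Tf lam₁ hα hδ (lam₁_mem hα hδ)
  rwa [Tf_lam₁ hα hδ] at h

variable (lam₁) in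
lemma Sf_mono : StrictMono (Sf lam₁ hα hδ) := by
  intro y₁ y₂ h
  rcases lt_trichotomy (Sf lam₁ hα hδ y₁) (Sf lam₁ hα hδ y₂) with hc | hc | hc
  · exact hc
  · exfalso
    have := congrArg (Tf α δ lam₁) hc
    rw [Tf_Sf lam₁ hα hδ, Tf_Sf lam₁ hα hδ] at this
    exact absurd this (ne_of_lt h)
  · exfalso
    have := Tf_mono hα hδ (Sf_mem lam₁ hα hδ y₂) (Sf_mem lam₁ hα hδ y₁) hc
    rw [Tf_Sf lam₁ hα hδ, Tf_Sf lam₁ hα hδ] at this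
    linarith

variable (lam₁) in
lemma Sf_continuous : Continuous (Sf lam₁ hα hδ) := by
  rw [continuous_iff_continuousAt]
  intro y
  rw [ContinuousAt, tendsto_order]
  constructor
  · intro b hb
    have hmem := Sf_mem lam₁ hα hδ y
    set w := max b ((-(vI α δ lam₁) + Sf lam₁ hα hδ y) / 2) with hw
    have hw1 : w < Sf lam₁ hα hδ y := by
      apply max_lt hb
      have := hmem.1; linarith
    have hwmem : w ∈ Ioo (-(vI α δ lam₁)) (vI α δ lam₁) := by
      constructor
      · have h3 : (-(vI α δ lam₁) + Sf lam₁ hα hδ y) / 2 ≤ w := le_max_right _ _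
        have := hmem.1; linarith
      · exact lt_trans hw1 hmem.2
    have hTw : Tf α δ lam₁ w < y := by
      have h4 := Tf_mono hα hδ hwmem hmem hw1
      rwa [Tf_Sf lam₁ hα hδ] at h4
    filter_upwards [Ioi_mem_nhds hTw] with z hz
    by_contra hcon
    push_neg at hcon
    have h1 : Sf lam₁ hα hδ z ≤ w := le_trans hcon (le_max_left _ _)
    have h2 : Tf α δ lam₁ (Sf lam₁ hα hδ z) ≤ Tf α δ lam₁ w := by
      rcases eq_or_lt_of_le h1 with h | h
      · rw [h]
      · exact le_of_lt (Tf_mono hα hδ (Sf_mem lam₁ hα hδ z) hwmem h)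
    rw [Tf_Sf lam₁ hα hδ] at h2
    exact absurd (mem_Ioi.1 hz) (not_lt.2 h2)
  · intro b hb
    have hmem := Sf_mem lam₁ hα hδ y
    set w := min b ((Sf lam₁ hα hδ y + vI α δ lam₁) / 2) with hw
    have hw1 : Sf lam₁ hα hδ y < w := by
      apply lt_min hb
      have := hmem.2; linarith
    have hwmem : w ∈ Ioo (-(vI α δ lam₁)) (vI α δ lam₁) := by
      constructor
      · exact lt_trans hmem.1 hw1
      · have h3 : w ≤ (Sf lam₁ hα hδ y + vI α δ lam₁) / 2 := min_le_right _ _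
        have := hmem.2; linarith
    have hTw : y < Tf α δ lam₁ w := by
      have h4 := Tf_mono hα hδ hmem hwmem hw1
      rwa [Tf_Sf lam₁ hα hδ] at h4
    filter_upwards [Iio_mem_nhds hTw] with z hz
    by_contra hcon
    push_neg at hcon
    have h1 : w ≤ Sf lam₁ hα hδ z := le_trans (min_le_left _ _) hcon
    have h2 : Tf α δ lam₁ w ≤ Tf α δ lam₁ (Sf lam₁ hα hδ z) := by
      rcases eq_or_lt_of_le h1 with h | h
      · rw [h]
      · exact le_of_lt (Tf_mono hα hδ hwmem (Sf_mem lam₁ hα hδ z) h)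
    rw [Tf_Sf lam₁ hα hδ] at h2
    exact absurd (mem_Iio.1 hz) (not_lt.2 h2)

variable (lam₁) in
lemma Sf_hasDeriv (t : ℝ) : HasDerivAt (Sf lam₁ hα hδ) (gf α δ lam₁ (Sf lam₁ hα hδ t))⁻¹ t := by
  apply HasDerivAt.of_local_left_inverse (Sf_continuous lam₁ hα hδ).continuousAt
    (hasDerivAt_Tf hα hδ (Sf_mem lam₁ hα hδ t))
    (ne_of_gt (gf_pos hδ (qf_pos hα hδ (Sf_mem lam₁ hα hδ t))))
  filter_upwards with z
  exact Tf_Sf lam₁ hα hδ z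

variable (lam₁) in
def lamF (hα : 1 < α) (hδ : 0 < δ) (t : ℝ) : ℝ := Lf α δ lam₁ (Sf lam₁ hα hδ t)

variable (lam₁) in
lemma lamF_pos (t : ℝ) : 0 < lamF lam₁ hα hδ t := Lf_pos (qf_pos hα hδ (Sf_mem lam₁ hα hδ t))

variable (lam₁) in
lemma lamF_hasDeriv (t : ℝ) : HasDerivAt (lamF lam₁ hα hδ) (Sf lam₁ hα hδ t) t := by
  have h1 := (hasDerivAt_Lf hα hδ (qf_pos hα hδ (Sf_mem lam₁ hα hδ t))).comp t (Sf_hasDeriv lam₁ hα hδ t)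
  have hg := gf_pos hδ (qf_pos hα hδ (Sf_mem lam₁ hα hδ t))
  have heq : Sf lam₁ hα hδ t * Lf α δ lam₁ (Sf lam₁ hα hδ t) ^ α / δ
      * (gf α δ lam₁ (Sf lam₁ hα hδ t))⁻¹ = Sf lam₁ hα hδ t := by
    rw [Lf_pow hα hδ (qf_pos hα hδ (Sf_mem lam₁ hα hδ t))]
    field_simp
  rw [heq] at h1
  exact h1

variable (lam₁) in
lemma lamF_deriv : deriv (lamF lam₁ hα hδ) = Sf lam₁ hα hδ :=
  funext fun t => (lamF_hasDeriv lam₁ hα hδ t).deriv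

variable (lam₁) in
lemma lamF_zero : lamF lam₁ hα hδ 0 = 1 := by
  show Lf α δ lam₁ (Sf lam₁ hα hδ 0) = 1
  rw [Sf_zero lam₁ hα hδ]
  show qf α δ lam₁ lam₁ ^ (-(α - 1)⁻¹) = 1
  rw [qf_lam₁, Real.one_rpow]

lemma exists_sol : ∃ lam : ℝ → ℝ,
    (∀ t : ℝ, 0 < lam t ∧ HasDerivAt lam (deriv lam t) t ∧
      HasDerivAt (deriv lam) (deriv (deriv lam) t) t ∧
      deriv (deriv lam) t * lam t ^ α = δ) ∧ lam 0 = 1 ∧ deriv lam 0 = lam₁ ∧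
    ∃ c₁ c₂ : ℝ, 0 < c₁ ∧ c₁ ≤ c₂ ∧ ∃ T₀ : ℝ, ∀ t ≥ T₀, c₁ * t ≤ lam t ∧ lam t ≤ c₂ * t := by
  refine ⟨lamF lam₁ hα hδ, fun t => ?_, lamF_zero lam₁ hα hδ, ?_, ?_⟩
  · refine ⟨lamF_pos lam₁ hα hδ t, ?_, ?_, ?_⟩
    · rw [lamF_deriv lam₁ hα hδ]; exact lamF_hasDeriv lam₁ hα hδ t
    · rw [lamF_deriv lam₁ hα hδ]
      have := (Sf_hasDeriv lam₁ hα hδ t).deriv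
      rw [this]
      exact Sf_hasDeriv lam₁ hα hδ t
    · rw [lamF_deriv lam₁ hα hδ]
      rw [(Sf_hasDeriv lam₁ hα hδ t).deriv]
      have hq := qf_pos hα hδ (Sf_mem lam₁ hα hδ t)
      have hg := gf_pos hδ hq
      show (gf α δ lam₁ (Sf lam₁ hα hδ t))⁻¹ * Lf α δ lam₁ (Sf lam₁ hα hδ t) ^ α = δ
      rw [Lf_pow hα hδ hq]
      field_simp
  · rw [lamF_deriv lam₁ hα hδ, Sf_zero lam₁ hα hδ]
  · -- asymptotics
    have hvI' := hvI (lam₁ := lam₁) hα hδ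
    have hl1 := lam₁_mem (lam₁ := lam₁) hα hδ
    set v₁ := max lam₁ (vI α δ lam₁ / 2) with hv₁
    have hv₁mem : v₁ ∈ Ioo (-(vI α δ lam₁)) (vI α δ lam₁) := by
      constructor
      · exact lt_of_lt_of_le hl1.1 (le_max_left _ _)
      · exact max_lt hl1.2 (by linarith)
    set t₁ := Tf α δ lam₁ v₁ with ht₁
    have ht₁0 : 0 ≤ t₁ := by
      rcases eq_or_lt_of_le (le_max_left lam₁ (vI α δ lam₁ / 2)) with h | h
      · have h11 : Tf α δ lam₁ v₁ = 0 := by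
          rw [hv₁, ← h]
          exact Tf_lam₁ hα hδ
        rw [ht₁, h11]
      · have := Tf_mono hα hδ hl1 hv₁mem h
        rw [Tf_lam₁ hα hδ] at this
        exact this.le
    have hSt₁ : Sf lam₁ hα hδ t₁ = v₁ := Sf_Tf lam₁ hα hδ hv₁mem
    -- upper bound
    have hub : ∀ t, 0 ≤ t → lamF lam₁ hα hδ t ≤ 1 + vI α δ lam₁ * t := by
      have hsm : StrictMono (fun t => 1 + vI α δ lam₁ * t - lamF lam₁ hα hδ t) := by
        apply strictMono_of_deriv_pos
        intro t
        have hd := ((hasDerivAt_const t (1:ℝ)).add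
          ((hasDerivAt_id t).const_mul (vI α δ lam₁))).sub (lamF_hasDeriv lam₁ hα hδ t)
        have hd2 : HasDerivAt (fun t => 1 + vI α δ lam₁ * t - lamF lam₁ hα hδ t)
            (0 + vI α δ lam₁ * 1 - Sf lam₁ hα hδ t) t := hd
        rw [hd2.deriv]
        have := (Sf_mem lam₁ hα hδ t).2
        simp only [id_eq] at *
        linarith
      intro t ht
      rcases eq_or_lt_of_le ht with h | h
      · rw [← h, lamF_zero lam₁ hα hδ]; norm_num
      · have h5 := hsm h
        have h0 : 1 + vI α δ lam₁ * 0 - lamF lam₁ hα hδ 0 = 0 := by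
          rw [lamF_zero lam₁ hα hδ]; ring
        simp only [h0] at h5
        linarith [h5]
    -- lower bound
    have hlc : Continuous (lamF lam₁ hα hδ) := by
      rw [continuous_iff_continuousAt]
      exact fun t => (lamF_hasDeriv lam₁ hα hδ t).continuousAt
    have hmono : MonotoneOn (fun t => lamF lam₁ hα hδ t - vI α δ lam₁ / 2 * t) (Ici t₁) := by
      apply monotoneOn_of_deriv_nonneg (convex_Ici _)
      · exact (hlc.sub (continuous_const.mul continuous_id)).continuousOn
      · intro t ht
        exact ((lamF_hasDeriv lam₁ hα hδ t).sub
          ((hasDerivAt_id t).const_mul (vI α δ lam₁ / 2))).differentiableAt.differentiableWithinAt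
      · intro t ht
        rw [interior_Ici] at ht
        have hd := (lamF_hasDeriv lam₁ hα hδ t).sub ((hasDerivAt_id t).const_mul (vI α δ lam₁ / 2))
        have hd2 : HasDerivAt (fun t => lamF lam₁ hα hδ t - vI α δ lam₁ / 2 * t)
            (Sf lam₁ hα hδ t - vI α δ lam₁ / 2 * 1) t := hd
        rw [hd2.deriv]
        have h6 : v₁ ≤ Sf lam₁ hα hδ t := by
          rw [← hSt₁]
          exact (Sf_mono lam₁ hα hδ).monotone (le_of_lt (mem_Ioi.1 ht))
        have h7 : vI α δ lam₁ / 2 ≤ v₁ := le_max_right _ _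
        linarith
    refine ⟨vI α δ lam₁ / 4, 1 + vI α δ lam₁, by linarith, by linarith, max 1 (2 * t₁), ?_⟩
    intro t ht
    have ht1 : 1 ≤ t := le_trans (le_max_left _ _) ht
    have ht2 : 2 * t₁ ≤ t := le_trans (le_max_right _ _) ht
    have htt₁ : t₁ ≤ t := by linarith
    constructor
    · have h8 := hmono (mem_Ici.2 (le_refl t₁)) (mem_Ici.2 htt₁) htt₁
      have h9 := lamF_pos lam₁ hα hδ t₁
      simp only at h8
      nlinarith
    · have h10 := hub t (by linarith)
      nlinarith

omit hα in
lemma unique_aux (hα' : 0 < α) {f g : ℝ → ℝ}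
    (hf : ∀ t ∈ Ici (0:ℝ), 0 < f t ∧ HasDerivAt f (deriv f t) t ∧
      HasDerivAt (deriv f) (deriv (deriv f) t) t ∧ deriv (deriv f) t * f t ^ α = δ)
    (hg : ∀ t ∈ Ici (0:ℝ), 0 < g t ∧ HasDerivAt g (deriv g t) t ∧
      HasDerivAt (deriv g) (deriv (deriv g) t) t ∧ deriv (deriv g) t * g t ^ α = δ)
    (h0 : f 0 = g 0) (h0' : deriv f 0 = deriv g 0) :
    ∀ t ∈ Ici (0:ℝ), f t = g t := by
  intro b hb
  have hb0 : (0:ℝ) ≤ b := hb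
  have hne : (Icc (0:ℝ) b).Nonempty := nonempty_Icc.2 hb0
  have hfc : ContinuousOn f (Icc 0 b) :=
    fun τ hτ => ((hf τ (mem_Ici.2 hτ.1)).2.1).continuousAt.continuousWithinAt
  have hgc : ContinuousOn g (Icc 0 b) :=
    fun τ hτ => ((hg τ (mem_Ici.2 hτ.1)).2.1).continuousAt.continuousWithinAt
  have hfc' : ContinuousOn (deriv f) (Icc 0 b) :=
    fun τ hτ => ((hf τ (mem_Ici.2 hτ.1)).2.2.1).continuousAt.continuousWithinAt
  have hgc' : ContinuousOn (deriv g) (Icc 0 b) :=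
    fun τ hτ => ((hg τ (mem_Ici.2 hτ.1)).2.2.1).continuousAt.continuousWithinAt
  obtain ⟨am, ham, hfam⟩ := isCompact_Icc.exists_isMinOn hne hfc
  obtain ⟨aM, haM, hfaM⟩ := isCompact_Icc.exists_isMaxOn hne hfc
  obtain ⟨bm, hbm, hgbm⟩ := isCompact_Icc.exists_isMinOn hne hgc
  obtain ⟨bM, hbM, hgbM⟩ := isCompact_Icc.exists_isMaxOn hne hgc
  set m : ℝ := min (f am) (g bm) with hm_def
  set M : ℝ := max (f aM) (g bM) with hM_def
  have hm : 0 < m := lt_min (hf am (mem_Ici.2 ham.1)).1 (hg bm (mem_Ici.2 hbm.1)).1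
  have hmem_f : ∀ τ ∈ Icc (0:ℝ) b, f τ ∈ Icc m M := fun τ hτ =>
    ⟨le_trans (min_le_left _ _) (hfam hτ), le_trans (hfaM hτ) (le_max_left _ _)⟩
  have hmem_g : ∀ τ ∈ Icc (0:ℝ) b, g τ ∈ Icc m M := fun τ hτ =>
    ⟨le_trans (min_le_right _ _) (hgbm hτ), le_trans (hgbM hτ) (le_max_right _ _)⟩
  -- the vector field and its Lipschitz property
  set h : ℝ → ℝ := fun x => δ * x ^ (-α) with hh_def
  set C : ℝ := δ * α * m ^ (-α - 1) with hC_def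
  have hC : 0 ≤ C := by
    have := Real.rpow_pos_of_pos hm (-α - 1)
    positivity
  have hlip : LipschitzOnWith C.toNNReal h (Icc m M) := by
    apply Convex.lipschitzOnWith_of_nnnorm_hasDerivWithin_le (f' := fun x => δ * (-α * x ^ (-α - 1)))
      (convex_Icc m M)
    · intro x hx
      have hx0 : x ≠ 0 := by have := hx.1; intro hc; rw [hc] at this; linarith
      exact ((Real.hasDerivAt_rpow_const (p := -α) (Or.inl hx0)).const_mul δ).hasDerivWithinAt
    · intro x hx
      have hxpos : 0 < x := lt_of_lt_of_le hm hx.1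
      have hb1 : x ^ (-α - 1) ≤ m ^ (-α - 1) :=
        Real.rpow_le_rpow_of_nonpos hm hx.1 (by linarith)
      have hrp := Real.rpow_pos_of_pos hxpos (-α - 1)
      have habs : ‖δ * (-α * x ^ (-α - 1))‖ ≤ C := by
        rw [Real.norm_eq_abs, abs_mul, abs_mul, abs_neg, abs_of_pos hδ, abs_of_pos hα',
          abs_of_pos hrp, hC_def]
        rw [mul_assoc]
        have : α * x ^ (-α - 1) ≤ α * m ^ (-α - 1) := by nlinarith
        nlinarith
      rw [← NNReal.coe_le_coe, coe_nnnorm, Real.coe_toNNReal _ hC]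
      exact habs
  set V : ℝ → ℝ × ℝ → ℝ × ℝ := fun _ p => (p.2, h p.1) with hV_def
  set K : NNReal := max 1 (C.toNNReal * 1) with hK_def
  have hVlip : ∀ t : ℝ, LipschitzOnWith K (V t) (Icc m M ×ˢ (univ : Set ℝ)) := by
    intro t
    apply LipschitzOnWith.prodMk
    · exact (LipschitzWith.prod_snd).lipschitzOnWith
    · exact hlip.comp (LipschitzWith.prod_fst).lipschitzOnWith
        (fun p (hp : p ∈ Icc m M ×ˢ (univ : Set ℝ)) => hp.1)
  -- the paired solutions
  have hde_f : ∀ τ ∈ Ico (0:ℝ) b, deriv (deriv f) τ = h (f τ) := by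
    intro τ hτ
    have hode := (hf τ (mem_Ici.2 hτ.1)).2.2.2
    have hfp := (hf τ (mem_Ici.2 hτ.1)).1
    have hp : (0:ℝ) < f τ ^ α := Real.rpow_pos_of_pos hfp α
    show deriv (deriv f) τ = δ * f τ ^ (-α)
    rw [Real.rpow_neg hfp.le]
    field_simp
    linarith [hode]
  have hde_g : ∀ τ ∈ Ico (0:ℝ) b, deriv (deriv g) τ = h (g τ) := by
    intro τ hτ
    have hode := (hg τ (mem_Ici.2 hτ.1)).2.2.2
    have hgp := (hg τ (mem_Ici.2 hτ.1)).1
    have hp : (0:ℝ) < g τ ^ α := Real.rpow_pos_of_pos hgp α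
    show deriv (deriv g) τ = δ * g τ ^ (-α)
    rw [Real.rpow_neg hgp.le]
    field_simp
    linarith [hode]
  have hF : ∀ τ ∈ Ico (0:ℝ) b, HasDerivWithinAt (fun τ => (f τ, deriv f τ))
      (V τ (f τ, deriv f τ)) (Ici τ) τ := by
    intro τ hτ
    have h1 := ((hf τ (mem_Ici.2 hτ.1)).2.1).prodMk ((hf τ (mem_Ici.2 hτ.1)).2.2.1)
    rw [hde_f τ hτ] at h1
    exact h1.hasDerivWithinAt
  have hG : ∀ τ ∈ Ico (0:ℝ) b, HasDerivWithinAt (fun τ => (g τ, deriv g τ))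
      (V τ (g τ, deriv g τ)) (Ici τ) τ := by
    intro τ hτ
    have h1 := ((hg τ (mem_Ici.2 hτ.1)).2.1).prodMk ((hg τ (mem_Ici.2 hτ.1)).2.2.1)
    rw [hde_g τ hτ] at h1
    exact h1.hasDerivWithinAt
  have hkey := ODE_solution_unique_of_mem_Icc_right (fun t _ => hVlip t)
    (hfc.prodMk hfc') hF
    (fun τ hτ => Set.mk_mem_prod (hmem_f τ (Ico_subset_Icc_self hτ)) (mem_univ _))
    (hgc.prodMk hgc') hG
    (fun τ hτ => Set.mk_mem_prod (hmem_g τ (Ico_subset_Icc_self hτ)) (mem_univ _))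
    (by rw [h0, h0'])
  have := hkey (right_mem_Icc.2 hb0)
  exact congrArg Prod.fst this

end SiderisAux

/-- Global existence, uniqueness on `[0,∞)`, and linear growth for the
Sideris ODE `λ'' λ^{3γ-2} = δ` with `1 < γ ≤ 5/3`, `δ > 0`. -/
theorem sideris_ode_global (γ δ lam₁ : ℝ) (hγ : 1 < γ ∧ γ ≤ 5/3) (hδ : 0 < δ) :
    ∃ lam : ℝ → ℝ, SiderisSol γ δ lam₁ lam ∧
      (∀ lam' : ℝ → ℝ, SiderisSol γ δ lam₁ lam' → ∀ t ∈ Ici (0:ℝ), lam' t = lam t) ∧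
      ∃ c₁ c₂ : ℝ, 0 < c₁ ∧ c₁ ≤ c₂ ∧
        ∃ T : ℝ, ∀ t ≥ T, c₁ * t ≤ lam t ∧ lam t ≤ c₂ * t := by
  have hα : 1 < 3 * γ - 2 := by linarith [hγ.1]
  obtain ⟨lam, hall, h0, h0', c₁, c₂, hc₁, hc₁₂, T₀, hT⟩ :=
    SiderisAux.exists_sol (α := 3 * γ - 2) (lam₁ := lam₁) hα hδ
  refine ⟨lam, ⟨fun t _ => hall t, h0, h0'⟩, ?_, c₁, c₂, hc₁, hc₁₂, T₀, hT⟩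
  intro lam' hs'
  exact SiderisAux.unique_aux hδ (by linarith [hγ.1] : (0:ℝ) < 3 * γ - 2) hs'.1
    (fun t _ => hall t) (by rw [hs'.2.1, h0]) (by rw [hs'.2.2, h0'])
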